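/- Let n ≥ 2, β ∈ ℝ, and let J assign a real coupling J_{(v,k)} to each edge (v,k) of the periodic lattice. Suppose that for each edge (v,k) there is a finite type A and a map R^{(v,k)} : {−1,1} → A → ℝ with e^{β·J_{(v,k)}·s·s'} = Σ_{a∈A} R^{(v,k)}(s,a)·R^{(v,k)}(s',a) for all s, s' ∈ {−1,1}. Define the site-dependent vertex tensor T^v(a,b,c,d) = Σ_{s∈{−1,1}} R^{(v−e₁,1)}(s,a)·R^{(v,1)}(s,b)·R^{(v−e₂,2)}(s,c)·R^{(v,2)}(s,d). Then Σ_{x : V×{1,2} → A} Π_{v∈V} T^v(x(v−e₁,1), x(v,1), x(v−e₂,2), x(v,2)) = Z_{N,J}(β), the partition function of the 2D Edwards–Anderson model with couplings J. -/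
import Mathlib


open Finset

/-- The spin values `{-1, 1}` as a (finite) subtype of `ℝ`. -/
abbrev Spin : Type := ({-1, 1} : Finset ℝ)

/-- Vertices of the 2D periodic `n × n` lattice. -/
abbrev V2 (n : ℕ) := ZMod n × ZMod n

/-- The 2D Edwards–Anderson energy with edge couplings `J`:
`H_{N,J}(σ) = −Σ_v (J_{(v,1)} σ_v σ_{v+e₁} + J_{(v,2)} σ_v σ_{v+e₂})`. -/
noncomputable def H2J (n : ℕ) [NeZero n] (J : V2 n × Fin 2 → ℝ) (σ : V2 n → Spin) : ℝ :=
  -∑ v : V2 n, (J (v, 0) * (σ v : ℝ) * (σ (v + (1, 0)) : ℝ)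
    + J (v, 1) * (σ v : ℝ) * (σ (v + (0, 1)) : ℝ))

/-- If for each edge `ed` the map `R ed` splits the edge Boltzmann weight
`e^{β J_{ed} s s'} = Σ_a R^{ed}(s,a) R^{ed}(s',a)`, then the contraction of the tensor
network built from the site-dependent vertex tensors
`T^v(a,b,c,d) = Σ_s R^{(v−e₁,1)}(s,a) R^{(v,1)}(s,b) R^{(v−e₂,2)}(s,c) R^{(v,2)}(s,d)`
equals the Edwards–Anderson partition function `Z_{N,J}(β)`. -/
theorem edwardsAnderson_network_eq_partitionFunction
    (n : ℕ) [NeZero n] (hn : 2 ≤ n) (β : ℝ)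
    (J : V2 n × Fin 2 → ℝ)
    (A : Type) [Fintype A] (R : V2 n × Fin 2 → Spin → A → ℝ)
    (hR : ∀ (ed : V2 n × Fin 2) (s s' : Spin),
      Real.exp (β * J ed * (s : ℝ) * (s' : ℝ)) = ∑ a : A, R ed s a * R ed s' a) :
    ∑ x : V2 n × Fin 2 → A, ∏ v : V2 n,
        (∑ s : Spin, R (v - (1, 0), 0) s (x (v - (1, 0), 0)) * R (v, 0) s (x (v, 0)) *
          R (v - (0, 1), 1) s (x (v - (0, 1), 1)) * R (v, 1) s (x (v, 1)))
      = ∑ σ : V2 n → Spin, Real.exp (-β * H2J n J σ) := by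
  classical
  have expand : ∀ x : V2 n × Fin 2 → A,
      (∏ v : V2 n,
        (∑ s : Spin, R (v - (1, 0), 0) s (x (v - (1, 0), 0)) * R (v, 0) s (x (v, 0)) *
          R (v - (0, 1), 1) s (x (v - (0, 1), 1)) * R (v, 1) s (x (v, 1))))
      = ∑ σ : V2 n → Spin, ∏ v : V2 n,
          R (v - (1, 0), 0) (σ v) (x (v - (1, 0), 0)) * R (v, 0) (σ v) (x (v, 0)) *
          R (v - (0, 1), 1) (σ v) (x (v - (0, 1), 1)) * R (v, 1) (σ v) (x (v, 1)) := by
    intro x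
    rw [Finset.prod_univ_sum, Fintype.piFinset_univ]
  simp only [expand]
  rw [Finset.sum_comm]
  refine Finset.sum_congr rfl fun σ _ => ?_
  have hx : ∀ x : V2 n × Fin 2 → A,
      (∏ v : V2 n,
          R (v - (1, 0), 0) (σ v) (x (v - (1, 0), 0)) * R (v, 0) (σ v) (x (v, 0)) *
          R (v - (0, 1), 1) (σ v) (x (v - (0, 1), 1)) * R (v, 1) (σ v) (x (v, 1)))
      = ∏ ed : V2 n × Fin 2,
          (R ed (σ ed.1) (x ed) *
           R ed (σ (ed.1 + (if ed.2 = 0 then (1, 0) else (0, 1)))) (x ed)) := by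
    intro x
    have h1 : (∏ v : V2 n, R (v - (1, 0), 0) (σ v) (x (v - (1, 0), 0)))
        = ∏ v : V2 n, R (v, 0) (σ (v + (1, 0))) (x (v, 0)) := by
      rw [← Equiv.prod_comp (Equiv.subRight ((1, 0) : V2 n))
        (fun w => R (w, 0) (σ (w + (1, 0))) (x (w, 0)))]
      simp [sub_add_cancel]
    have h2 : (∏ v : V2 n, R (v - (0, 1), 1) (σ v) (x (v - (0, 1), 1)))
        = ∏ v : V2 n, R (v, 1) (σ (v + (0, 1))) (x (v, 1)) := by
      rw [← Equiv.prod_comp (Equiv.subRight ((0, 1) : V2 n))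
        (fun w => R (w, 1) (σ (w + (0, 1))) (x (w, 1)))]
      simp [sub_add_cancel]
    have hsplit : (∏ ed : V2 n × Fin 2,
          (R ed (σ ed.1) (x ed) *
           R ed (σ (ed.1 + (if ed.2 = 0 then (1, 0) else (0, 1)))) (x ed)))
        = ∏ v : V2 n,
            ((R (v, 0) (σ v) (x (v, 0)) * R (v, 0) (σ (v + (1, 0))) (x (v, 0))) *
             (R (v, 1) (σ v) (x (v, 1)) * R (v, 1) (σ (v + (0, 1))) (x (v, 1)))) := by
      rw [Fintype.prod_prod_type (fun ed : V2 n × Fin 2 =>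
        R ed (σ ed.1) (x ed) *
          R ed (σ (ed.1 + (if ed.2 = 0 then (1, 0) else (0, 1)))) (x ed))]
      exact Finset.prod_congr rfl fun v _ => by
        rw [Fin.prod_univ_two]
        norm_num
    rw [hsplit]
    calc (∏ v : V2 n,
          R (v - (1, 0), 0) (σ v) (x (v - (1, 0), 0)) * R (v, 0) (σ v) (x (v, 0)) *
          R (v - (0, 1), 1) (σ v) (x (v - (0, 1), 1)) * R (v, 1) (σ v) (x (v, 1)))
        = (∏ v : V2 n, R (v - (1, 0), 0) (σ v) (x (v - (1, 0), 0))) *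
          (∏ v : V2 n, R (v, 0) (σ v) (x (v, 0))) *
          (∏ v : V2 n, R (v - (0, 1), 1) (σ v) (x (v - (0, 1), 1))) *
          (∏ v : V2 n, R (v, 1) (σ v) (x (v, 1))) := by
            rw [← Finset.prod_mul_distrib, ← Finset.prod_mul_distrib,
              ← Finset.prod_mul_distrib]
      _ = ∏ v : V2 n,
            ((R (v, 0) (σ v) (x (v, 0)) * R (v, 0) (σ (v + (1, 0))) (x (v, 0))) *
             (R (v, 1) (σ v) (x (v, 1)) * R (v, 1) (σ (v + (0, 1))) (x (v, 1)))) := by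
            rw [h1, h2, ← Finset.prod_mul_distrib, ← Finset.prod_mul_distrib,
              ← Finset.prod_mul_distrib]
            exact Finset.prod_congr rfl fun v _ => by ring
  simp only [hx]
  have hsum : (∑ x : V2 n × Fin 2 → A, ∏ ed : V2 n × Fin 2,
      (R ed (σ ed.1) (x ed) *
       R ed (σ (ed.1 + (if ed.2 = 0 then (1, 0) else (0, 1)))) (x ed)))
      = ∏ ed : V2 n × Fin 2, ∑ a : A,
          R ed (σ ed.1) a * R ed (σ (ed.1 + (if ed.2 = 0 then (1, 0) else (0, 1)))) a := by
    rw [Finset.prod_univ_sum (fun _ => (univ : Finset A))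
      (fun ed a => R ed (σ ed.1) a *
        R ed (σ (ed.1 + (if ed.2 = 0 then (1, 0) else (0, 1)))) a),
      Fintype.piFinset_univ]
  rw [hsum]
  have hexp : ∀ ed : V2 n × Fin 2, (∑ a : A,
      R ed (σ ed.1) a * R ed (σ (ed.1 + (if ed.2 = 0 then (1, 0) else (0, 1)))) a)
      = Real.exp (β * J ed * (σ ed.1 : ℝ) *
          (σ (ed.1 + (if ed.2 = 0 then (1, 0) else (0, 1))) : ℝ)) :=
    fun ed => (hR ed _ _).symm
  simp only [hexp]
  rw [← Real.exp_sum]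
  congr 1
  rw [Fintype.sum_prod_type (f := fun ed : V2 n × Fin 2 => β * J ed * (σ ed.1 : ℝ) *
      (σ (ed.1 + (if ed.2 = 0 then (1, 0) else (0, 1))) : ℝ))]
  simp only [Fin.sum_univ_two, if_true, one_ne_zero, if_false, H2J, neg_mul_neg,
    Finset.mul_sum]
  exact Finset.sum_congr rfl fun v _ => by ring
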